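/- Let y, z ∈ ℝ² with y ≠ z, set d := |y−z|/2, and let D := B_{3d}(y) ∪ B_{3d}(z) be the union of the open disks of radius 3d centered at y and z. Then ∫_D 1/(|x−y| |x−z|) dx ≤ 12π. -/

import Mathlib

open MeasureTheory
open scoped Real

open MeasureTheory Metric Set
open scoped Real ENNReal

lemma vol_ball2 (a : EuclideanSpace ℝ (Fin 2)) (r : ℝ) :
    volume (ball a r) = ENNReal.ofReal π * ENNReal.ofReal r ^ 2 := by
  rw [EuclideanSpace.volume_ball]
  simp only [Fintype.card_fin]
  rw [show ((2:ℕ):ℝ)/2 + 1 = 2 by norm_num, Real.Gamma_two, div_one,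
    Real.sq_sqrt Real.pi_nonneg, mul_comm]

lemma key (a : EuclideanSpace ℝ (Fin 2)) {R : ℝ} (hR : 0 < R) :
    (∫⁻ x in ball a R, ENNReal.ofReal ‖x - a‖⁻¹) ≤ ENNReal.ofReal (2 * π * R) := by
  have hmeas : Measurable fun x : EuclideanSpace ℝ (Fin 2) => ‖x - a‖⁻¹ :=
    ((measurable_id.sub measurable_const).norm).inv
  rw [lintegral_eq_lintegral_meas_lt _
    (Filter.Eventually.of_forall fun x => inv_nonneg.mpr (norm_nonneg _)) hmeas.aemeasurable]
  have hsplit : Ioi (0:ℝ) = Ioc 0 R⁻¹ ∪ Ioi R⁻¹ :=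
    (Ioc_union_Ioi_eq_Ioi (inv_nonneg.mpr hR.le)).symm
  rw [hsplit, lintegral_union measurableSet_Ioi (Ioc_disjoint_Ioi le_rfl)]
  have h1 : (∫⁻ t in Ioc (0:ℝ) R⁻¹,
      (volume.restrict (ball a R)) {x | t < ‖x - a‖⁻¹}) ≤ ENNReal.ofReal (π * R) := by
    calc (∫⁻ t in Ioc (0:ℝ) R⁻¹, (volume.restrict (ball a R)) {x | t < ‖x - a‖⁻¹})
        ≤ ∫⁻ _ in Ioc (0:ℝ) R⁻¹, ENNReal.ofReal π * ENNReal.ofReal R ^ 2 := by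
          refine setLIntegral_mono' measurableSet_Ioc fun t ht => ?_
          rw [← vol_ball2 a R]
          calc (volume.restrict (ball a R)) {x | t < ‖x - a‖⁻¹}
              ≤ (volume.restrict (ball a R)) univ := measure_mono (subset_univ _)
            _ = volume (ball a R) := by simp
      _ = ENNReal.ofReal π * ENNReal.ofReal R ^ 2 * ENNReal.ofReal R⁻¹ := by
          rw [setLIntegral_const]
          congr 1
          rw [Real.volume_Ioc]
          norm_num
      _ = ENNReal.ofReal (π * R) := by
          rw [← ENNReal.ofReal_pow hR.le, ← ENNReal.ofReal_mul Real.pi_nonneg,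
            ← ENNReal.ofReal_mul (by positivity)]
          congr 1
          field_simp
  have h2 : (∫⁻ t in Ioi R⁻¹,
      (volume.restrict (ball a R)) {x | t < ‖x - a‖⁻¹}) ≤ ENNReal.ofReal (π * R) := by
    have hRinv : (0:ℝ) < R⁻¹ := inv_pos.mpr hR
    calc (∫⁻ t in Ioi R⁻¹, (volume.restrict (ball a R)) {x | t < ‖x - a‖⁻¹})
        ≤ ∫⁻ t in Ioi R⁻¹, ENNReal.ofReal (π * t ^ (-2:ℝ)) := by
          refine setLIntegral_mono' measurableSet_Ioi fun t ht => ?_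
          have ht0 : (0:ℝ) < t := lt_trans hRinv ht
          have hsub : {x : EuclideanSpace ℝ (Fin 2) | t < ‖x - a‖⁻¹} ⊆ ball a t⁻¹ := by
            intro x hx
            simp only [mem_setOf_eq] at hx
            have hxa : (0:ℝ) < ‖x - a‖ := by
              by_contra h
              push_neg at h
              have : ‖x - a‖ = 0 := le_antisymm h (norm_nonneg _)
              rw [this] at hx
              simp at hx
              linarith
            rw [mem_ball, dist_eq_norm]
            exact (lt_inv_comm₀ ht0 hxa).mp hx
          calc (volume.restrict (ball a R)) {x | t < ‖x - a‖⁻¹}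
              ≤ volume (ball a t⁻¹) :=
                le_trans (measure_mono hsub) (Measure.restrict_le_self _)
            _ = ENNReal.ofReal (π * t ^ (-2:ℝ)) := by
                rw [vol_ball2, ← ENNReal.ofReal_pow (inv_nonneg.mpr ht0.le),
                  ← ENNReal.ofReal_mul Real.pi_nonneg]
                congr 1
                rw [Real.rpow_neg ht0.le, show ((2:ℝ)) = ((2:ℕ):ℝ) by norm_num,
                  Real.rpow_natCast, inv_pow]
      _ = ENNReal.ofReal (π * R) := by
          rw [← ofReal_integral_eq_lintegral_ofReal]
          · congr 1
            rw [MeasureTheory.integral_const_mul, integral_Ioi_rpow_of_lt (by norm_num) hRinv,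
              show (-2:ℝ)+1 = -1 by norm_num, Real.rpow_neg_one, inv_inv]
            ring
          · exact (integrableOn_Ioi_rpow_of_lt (by norm_num) hRinv).const_mul π
          · filter_upwards [ae_restrict_mem measurableSet_Ioi] with t ht
            have : (0:ℝ) < t := lt_trans hRinv ht
            positivity
  calc _ ≤ ENNReal.ofReal (π * R) + ENNReal.ofReal (π * R) := add_le_add h1 h2
    _ = ENNReal.ofReal (2 * π * R) := by
        rw [← ENNReal.ofReal_add (by positivity) (by positivity)]
        congr 1
        ring

lemma aux_inv (a b d : ℝ) (ha : 0 ≤ a) (hd : 0 < d) (hdb : d ≤ b) :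
    (a * b)⁻¹ ≤ d⁻¹ * a⁻¹ := by
  rcases eq_or_lt_of_le ha with rfl | ha0
  · simp
  · have h1 : (a * b)⁻¹ ≤ (a * d)⁻¹ := by
      apply inv_anti₀ (by positivity)
      exact mul_le_mul_of_nonneg_left hdb ha
    calc (a * b)⁻¹ ≤ (a * d)⁻¹ := h1
      _ = d⁻¹ * a⁻¹ := by rw [mul_inv, mul_comm]

/-- For distinct `y, z ∈ ℝ²` with `d = |y-z|/2` and
`D = B_{3d}(y) ∪ B_{3d}(z)`, one has `∫_D 1/(|x-y||x-z|) dx ≤ 12π`. -/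
theorem stmt9 (y z : EuclideanSpace ℝ (Fin 2)) (hyz : y ≠ z) :
    (∫ x in Metric.ball y (3 * (‖y - z‖ / 2)) ∪ Metric.ball z (3 * (‖y - z‖ / 2)),
        (‖x - y‖ * ‖x - z‖)⁻¹) ≤ 12 * π := by
  have hyz' : 0 < ‖y - z‖ := norm_sub_pos_iff.mpr hyz
  set d : ℝ := ‖y - z‖ / 2 with hd_def
  have hd : 0 < d := by positivity
  set R : ℝ := 3 * (‖y - z‖ / 2) with hR_def
  have hR : 0 < R := by positivity
  have hR3 : R = 3 * d := rfl
  set D : Set (EuclideanSpace ℝ (Fin 2)) := ball y R ∪ ball z R with hD_def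
  set gy : EuclideanSpace ℝ (Fin 2) → ℝ≥0∞ :=
    (ball y R).indicator fun x => ENNReal.ofReal ‖x - y‖⁻¹ with hgy_def
  set gz : EuclideanSpace ℝ (Fin 2) → ℝ≥0∞ :=
    (ball z R).indicator fun x => ENNReal.ofReal ‖x - z‖⁻¹ with hgz_def
  have claim : ∀ x ∈ D, ENNReal.ofReal ‖(‖x - y‖ * ‖x - z‖)⁻¹‖ ≤
      ENNReal.ofReal d⁻¹ * (gy x + gz x) := by
    intro x hx
    rw [Real.norm_eq_abs, abs_of_nonneg (by positivity)]
    have htri : 2 * d ≤ ‖x - y‖ + ‖x - z‖ := by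
      have h1 : ‖y - z‖ ≤ ‖y - x‖ + ‖x - z‖ := norm_sub_le_norm_sub_add_norm_sub y x z
      have h2 : ‖y - x‖ = ‖x - y‖ := norm_sub_rev y x
      rw [hd_def]; linarith
    rcases le_total ‖x - y‖ ‖x - z‖ with h | h
    · have hdz : d ≤ ‖x - z‖ := by linarith
      have hxy : x ∈ ball y R := by
        rcases hx with h1 | h2
        · exact h1
        · rw [mem_ball, dist_eq_norm] at h2 ⊢; linarith
      have hgyx : gy x = ENNReal.ofReal ‖x - y‖⁻¹ := Set.indicator_of_mem hxy _
      calc ENNReal.ofReal (‖x - y‖ * ‖x - z‖)⁻¹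
          ≤ ENNReal.ofReal (d⁻¹ * ‖x - y‖⁻¹) :=
            ENNReal.ofReal_le_ofReal (aux_inv _ _ _ (norm_nonneg _) hd hdz)
        _ = ENNReal.ofReal d⁻¹ * gy x := by
            rw [ENNReal.ofReal_mul (by positivity), hgyx]
        _ ≤ ENNReal.ofReal d⁻¹ * (gy x + gz x) :=
            mul_le_mul_right (self_le_add_right _ _) _
    · have hdz : d ≤ ‖x - y‖ := by linarith
      have hxz : x ∈ ball z R := by
        rcases hx with h1 | h2
        · rw [mem_ball, dist_eq_norm] at h1 ⊢; linarith
        · exact h2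
      have hgzx : gz x = ENNReal.ofReal ‖x - z‖⁻¹ := Set.indicator_of_mem hxz _
      calc ENNReal.ofReal (‖x - y‖ * ‖x - z‖)⁻¹
          ≤ ENNReal.ofReal (d⁻¹ * ‖x - z‖⁻¹) := by
            apply ENNReal.ofReal_le_ofReal
            rw [mul_comm ‖x - y‖]
            exact aux_inv _ _ _ (norm_nonneg _) hd hdz
        _ = ENNReal.ofReal d⁻¹ * gz x := by
            rw [ENNReal.ofReal_mul (by positivity), hgzx]
        _ ≤ ENNReal.ofReal d⁻¹ * (gy x + gz x) :=
            mul_le_mul_right (self_le_add_left _ _) _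
  have hD : MeasurableSet D := measurableSet_ball.union measurableSet_ball
  have hmgy : Measurable gy :=
    (((measurable_id.sub measurable_const).norm.inv).ennreal_ofReal).indicator measurableSet_ball
  have hL : (∫⁻ x in D, ENNReal.ofReal ‖(‖x - y‖ * ‖x - z‖)⁻¹‖) ≤
      ENNReal.ofReal (12 * π) := by
    calc (∫⁻ x in D, ENNReal.ofReal ‖(‖x - y‖ * ‖x - z‖)⁻¹‖)
        ≤ ∫⁻ x in D, ENNReal.ofReal d⁻¹ * (gy x + gz x) := setLIntegral_mono' hD claim
      _ ≤ ∫⁻ x, ENNReal.ofReal d⁻¹ * (gy x + gz x) := setLIntegral_le_lintegral _ _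
      _ = ENNReal.ofReal d⁻¹ * ((∫⁻ x, gy x) + ∫⁻ x, gz x) := by
          rw [lintegral_const_mul' _ _ ENNReal.ofReal_ne_top, lintegral_add_left hmgy]
      _ = ENNReal.ofReal d⁻¹ * ((∫⁻ x in ball y R, ENNReal.ofReal ‖x - y‖⁻¹) +
            ∫⁻ x in ball z R, ENNReal.ofReal ‖x - z‖⁻¹) := by
          rw [hgy_def, hgz_def, lintegral_indicator measurableSet_ball,
            lintegral_indicator measurableSet_ball]
      _ ≤ ENNReal.ofReal d⁻¹ * (ENNReal.ofReal (2 * π * R) + ENNReal.ofReal (2 * π * R)) :=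
          mul_le_mul_right (add_le_add (key y hR) (key z hR)) _
      _ = ENNReal.ofReal (12 * π) := by
          rw [← ENNReal.ofReal_add (by positivity) (by positivity),
            ← ENNReal.ofReal_mul (by positivity)]
          congr 1
          rw [hR3]
          field_simp
          ring
  calc (∫ x in D, (‖x - y‖ * ‖x - z‖)⁻¹)
      ≤ ‖∫ x in D, (‖x - y‖ * ‖x - z‖)⁻¹‖ := le_abs_self _
    _ ≤ (∫⁻ x in D, ENNReal.ofReal ‖(‖x - y‖ * ‖x - z‖)⁻¹‖).toReal :=
        norm_integral_le_lintegral_norm _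
    _ ≤ 12 * π := ENNReal.toReal_le_of_le_ofReal (by positivity) hL
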